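/- For n ∈ ℕ let G_n = (1/2 + 1/(2+n))·δ_0 + (1/2 − 1/(2+n))·δ_1 and let G = (1/2)·δ_0 + (1/2)·δ_1. Then: (a) ‖G_n − G‖ → 0 as n → ∞ (convergence in total variation); (b) for every n, the characteristic function g_n of G_n satisfies inf_{t∈ℝ} |g_n(t)| > 0, so G_n ∈ DS; (c) the characteristic function g(t) = 1/2 + (1/2)e^{it} of G vanishes at t = π, so G ∉ DS. Consequently the class DS is not closed under convergence in variation. -/

import Mathlib

open MeasureTheory Complex Filter
open scoped ENNReal

lemma myIntegrable_smul_dirac (f : ℝ → ℂ) (hf : Measurable f) (c : ℝ≥0∞) (hc : c ≠ ∞) (x : ℝ) :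
    Integrable f (c • Measure.dirac x) := by
  refine ⟨hf.aestronglyMeasurable, ?_⟩
  unfold HasFiniteIntegral
  rw [lintegral_smul_measure, lintegral_dirac]
  exact ENNReal.mul_lt_top hc.lt_top (by simp)

lemma integral_two_dirac (a b : ℝ≥0∞) (ha : a ≠ ∞) (hb : b ≠ ∞) (f : ℝ → ℂ) (hf : Measurable f) :
    ∫ x, f x ∂(a • Measure.dirac (0:ℝ) + b • Measure.dirac 1) =
      a.toReal • f 0 + b.toReal • f 1 := by
  rw [integral_add_measure (myIntegrable_smul_dirac f hf a ha 0) (myIntegrable_smul_dirac f hf b hb 1),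
    integral_smul_measure, integral_smul_measure, integral_dirac, integral_dirac]

noncomputable def tvDist (μ ν : Measure ℝ) : ℝ≥0∞ :=
  ⨆ (s : Set ℝ) (_ : MeasurableSet s), ((μ s - ν s) + (ν sᶜ - μ sᶜ))

theorem DS_not_closed_in_variation
    (Gn : ℕ → Measure ℝ) (G : Measure ℝ)
    (hGn : ∀ n : ℕ, Gn n =
      ENNReal.ofReal (1 / 2 + 1 / (2 + (n : ℝ))) • Measure.dirac (0 : ℝ) +
      ENNReal.ofReal (1 / 2 - 1 / (2 + (n : ℝ))) • Measure.dirac (1 : ℝ))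
    (hG : G = ENNReal.ofReal (1 / 2) • Measure.dirac (0 : ℝ) +
      ENNReal.ofReal (1 / 2) • Measure.dirac (1 : ℝ)) :
    Tendsto (fun n : ℕ => tvDist (Gn n) G) atTop (nhds 0) ∧
    (∀ n : ℕ, ∃ c : ℝ, 0 < c ∧ ∀ t : ℝ,
      c ≤ ‖∫ x : ℝ, Complex.exp (Complex.I * (t : ℂ) * (x : ℂ)) ∂(Gn n)‖) ∧
    (∫ x : ℝ, Complex.exp (Complex.I * (Real.pi : ℂ) * (x : ℂ)) ∂G) = 0 := by
  have hmeas : ∀ t : ℝ, Measurable fun x : ℝ => Complex.exp (Complex.I * (t : ℂ) * (x : ℂ)) := by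
    intro t
    exact Complex.measurable_exp.comp ((measurable_const.mul (Complex.measurable_ofReal)))
  have hpos : ∀ n : ℕ, (0:ℝ) < 1 / (2 + (n : ℝ)) := by
    intro n; positivity
  have hle : ∀ n : ℕ, 1 / (2 + (n : ℝ)) ≤ 1 / 2 := by
    intro n
    apply one_div_le_one_div_of_le (by norm_num)
    have : (0:ℝ) ≤ (n:ℝ) := Nat.cast_nonneg n
    linarith
  have hane : ∀ n : ℕ, (0:ℝ) ≤ 1 / 2 + 1 / (2 + (n : ℝ)) := fun n => by linarith [hpos n]
  have hbne : ∀ n : ℕ, (0:ℝ) ≤ 1 / 2 - 1 / (2 + (n : ℝ)) := fun n => by linarith [hle n]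
  refine ⟨?_, ?_, ?_⟩
  · -- part (a)
    set ε : ℕ → ℝ≥0∞ := fun n => ENNReal.ofReal (1 / (2 + (n : ℝ))) with hε
    have hbound : ∀ n : ℕ, tvDist (Gn n) G ≤ 2 * ε n := by
      intro n
      apply iSup₂_le
      intro s hs
      have hsplit : ENNReal.ofReal (1 / 2 + 1 / (2 + (n : ℝ))) =
          ENNReal.ofReal (1 / 2) + ε n := by
        rw [hε, ← ENNReal.ofReal_add (by norm_num) (hpos n).le]
      have hsplit2 : ENNReal.ofReal (1 / 2 : ℝ) =
          ENNReal.ofReal (1 / 2 - 1 / (2 + (n : ℝ))) + ε n := by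
        rw [hε, ← ENNReal.ofReal_add (hbne n) (hpos n).le]
        norm_num
      have happ : ∀ u : Set ℝ, Gn n u =
          ENNReal.ofReal (1 / 2 + 1 / (2 + (n : ℝ))) * Measure.dirac (0:ℝ) u +
          ENNReal.ofReal (1 / 2 - 1 / (2 + (n : ℝ))) * Measure.dirac (1:ℝ) u := by
        intro u; rw [hGn n]; simp [Measure.add_apply]
      have happG : ∀ u : Set ℝ, G u =
          ENNReal.ofReal (1/2) * Measure.dirac (0:ℝ) u +
          ENNReal.ofReal (1/2) * Measure.dirac (1:ℝ) u := by
        intro u; rw [hG]; simp [Measure.add_apply]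
      have hd : ∀ (x : ℝ) (u : Set ℝ), Measure.dirac x u ≤ 1 := by
        intro x u
        calc Measure.dirac x u ≤ Measure.dirac x Set.univ := measure_mono (Set.subset_univ u)
        _ = 1 := by simp
      have hεd : ∀ (x : ℝ) (u : Set ℝ), ε n * Measure.dirac x u ≤ ε n := by
        intro x u
        calc ε n * Measure.dirac x u ≤ ε n * 1 := mul_le_mul_right (hd x u) _
        _ = ε n := mul_one _
      have h1 : Gn n s - G s ≤ ε n := by
        rw [tsub_le_iff_right, happ s, happG s, hsplit]
        calc (ENNReal.ofReal (1/2) + ε n) * Measure.dirac (0:ℝ) s +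
              ENNReal.ofReal (1 / 2 - 1 / (2 + (n : ℝ))) * Measure.dirac (1:ℝ) s
            = ENNReal.ofReal (1/2) * Measure.dirac (0:ℝ) s + ε n * Measure.dirac (0:ℝ) s +
              ENNReal.ofReal (1 / 2 - 1 / (2 + (n : ℝ))) * Measure.dirac (1:ℝ) s := by ring
          _ ≤ ENNReal.ofReal (1/2) * Measure.dirac (0:ℝ) s + ε n +
              ENNReal.ofReal (1/2) * Measure.dirac (1:ℝ) s := by
              gcongr <;> first
                | exact hεd 0 s
                | linarith [hpos n]
          _ = ε n + (ENNReal.ofReal (1/2) * Measure.dirac (0:ℝ) s +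
              ENNReal.ofReal (1/2) * Measure.dirac (1:ℝ) s) := by ring
      have h2 : G sᶜ - Gn n sᶜ ≤ ε n := by
        rw [tsub_le_iff_right, happ sᶜ, happG sᶜ]
        calc ENNReal.ofReal (1/2) * Measure.dirac (0:ℝ) sᶜ +
              ENNReal.ofReal (1/2) * Measure.dirac (1:ℝ) sᶜ
            ≤ ENNReal.ofReal (1 / 2 + 1 / (2 + (n : ℝ))) * Measure.dirac (0:ℝ) sᶜ +
              (ENNReal.ofReal (1 / 2 - 1 / (2 + (n : ℝ))) + ε n) * Measure.dirac (1:ℝ) sᶜ := by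
              gcongr <;> first
                | linarith [hpos n]
                | exact le_of_eq hsplit2
          _ = ENNReal.ofReal (1 / 2 + 1 / (2 + (n : ℝ))) * Measure.dirac (0:ℝ) sᶜ +
              ENNReal.ofReal (1 / 2 - 1 / (2 + (n : ℝ))) * Measure.dirac (1:ℝ) sᶜ +
              ε n * Measure.dirac (1:ℝ) sᶜ := by ring
          _ ≤ ENNReal.ofReal (1 / 2 + 1 / (2 + (n : ℝ))) * Measure.dirac (0:ℝ) sᶜ +
              ENNReal.ofReal (1 / 2 - 1 / (2 + (n : ℝ))) * Measure.dirac (1:ℝ) sᶜ +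
              ε n := by gcongr; exact hεd 1 sᶜ
          _ = ε n + _ := by ring
      calc Gn n s - G s + (G sᶜ - Gn n sᶜ) ≤ ε n + ε n := add_le_add h1 h2
        _ = 2 * ε n := (two_mul _).symm
    have hreal : Tendsto (fun n : ℕ => 1 / (2 + (n : ℝ))) atTop (nhds 0) := by
      have h := (tendsto_atTop_add_const_left atTop (2:ℝ)
        tendsto_natCast_atTop_atTop).inv_tendsto_atTop
      exact h.congr (fun n => by simp [one_div])
    have h2ε : Tendsto (fun n => 2 * ε n) atTop (nhds 0) := by
      have h := ENNReal.Tendsto.const_mul (ENNReal.tendsto_ofReal hreal)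
        (Or.inr (by norm_num : (2:ℝ≥0∞) ≠ ∞))
      simpa only [hε, ENNReal.ofReal_zero, mul_zero] using h
    exact tendsto_of_tendsto_of_tendsto_of_le_of_le tendsto_const_nhds h2ε
      (fun n => zero_le) hbound
  · -- part (b)
    intro n
    refine ⟨1 / (2 + (n : ℝ)), hpos n, fun t => ?_⟩
    rw [hGn n, integral_two_dirac _ _ ENNReal.ofReal_ne_top ENNReal.ofReal_ne_top _ (hmeas t)]
    rw [ENNReal.toReal_ofReal (hane n), ENNReal.toReal_ofReal (hbne n)]
    have h0 : Complex.exp (Complex.I * (t : ℂ) * ((0:ℝ) : ℂ)) = 1 := by simp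
    have habs : ‖(((1 / 2 - 1 / (2 + (n : ℝ)) : ℝ) : ℂ) *
        Complex.exp (Complex.I * (t : ℂ) * ((1:ℝ) : ℂ)))‖ = 1 / 2 - 1 / (2 + (n : ℝ)) := by
      rw [norm_mul, Complex.norm_exp, Complex.norm_real, Real.norm_eq_abs]
      have hre : (Complex.I * (t:ℂ) * ((1:ℝ):ℂ)).re = 0 := by simp
      rw [hre, Real.exp_zero, mul_one, _root_.abs_of_nonneg (hbne n)]
    have key : (1 / 2 + 1 / (2 + (n : ℝ))) - (1 / 2 - 1 / (2 + (n : ℝ))) ≤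
        ‖(1 / 2 + 1 / (2 + (n : ℝ))) •
            Complex.exp (Complex.I * (t:ℂ) * ((0:ℝ):ℂ)) +
          (1 / 2 - 1 / (2 + (n : ℝ))) • Complex.exp (Complex.I * (t:ℂ) * ((1:ℝ):ℂ))‖ := by
      rw [h0, Complex.real_smul, Complex.real_smul, mul_one]
      calc (1 / 2 + 1 / (2 + (n : ℝ))) - (1 / 2 - 1 / (2 + (n : ℝ)))
          = ‖(((1 / 2 + 1 / (2 + (n : ℝ)) : ℝ) : ℂ))‖ -
            ‖(-(((1 / 2 - 1 / (2 + (n : ℝ)) : ℝ) : ℂ) *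
              Complex.exp (Complex.I * (t:ℂ) * ((1:ℝ):ℂ))))‖ := by
            rw [norm_neg, habs, Complex.norm_real, Real.norm_eq_abs, _root_.abs_of_nonneg (hane n)]
        _ ≤ ‖(((1 / 2 + 1 / (2 + (n : ℝ)) : ℝ) : ℂ) -
            -(((1 / 2 - 1 / (2 + (n : ℝ)) : ℝ) : ℂ) *
              Complex.exp (Complex.I * (t:ℂ) * ((1:ℝ):ℂ))))‖ :=
            norm_sub_norm_le _ _
        _ = _ := by rw [sub_neg_eq_add]
    refine le_trans ?_ key
    linarith [hpos n]
  · -- part (c)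
    rw [hG, integral_two_dirac _ _ ENNReal.ofReal_ne_top ENNReal.ofReal_ne_top _ (hmeas Real.pi)]
    rw [ENNReal.toReal_ofReal (by norm_num : (0:ℝ) ≤ 1/2)]
    have : Complex.I * (Real.pi : ℂ) * ((1:ℝ) : ℂ) = Real.pi * Complex.I := by
      push_cast; ring
    rw [this, Complex.exp_pi_mul_I]
    simp
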